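/- Suppose x* ∈ ℝⁿ, I = supp(Ψᵀx*), and there exist y ∈ ∂‖·‖₁(Ψᵀx*) and β ∈ ℝ^m with Ψy = Φᵀβ. Then for every δ > 0, λ > 0, and b with ‖Φx* − b‖₂ ≤ δ, every minimizer x of ‖Φx − b‖₂² + λ‖Ψᵀx‖₁ satisfies d_y(x, x*) ≤ (δ + λ‖β‖₂/2)²/λ and ‖Φx − b‖₂ ≤ δ + λ‖β‖₂. -/

import Mathlib

open Matrix

/-- ℓ₁ norm of a finite real vector. -/
noncomputable def l1 {k : ℕ} (v : Fin k → ℝ) : ℝ := ∑ i, |v i|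

/-- ℓ₂ (Euclidean) norm of a finite real vector. -/
noncomputable def l2 {k : ℕ} (v : Fin k → ℝ) : ℝ := Real.sqrt (∑ i, (v i) ^ 2)

/-- ℓ₁ norm of the subvector indexed by `S`. -/
noncomputable def l1S {k : ℕ} (S : Finset (Fin k)) (v : Fin k → ℝ) : ℝ := ∑ i ∈ S, |v i|

/-- ℓ₂ norm of the subvector indexed by `S`. -/
noncomputable def l2S {k : ℕ} (S : Finset (Fin k)) (v : Fin k → ℝ) : ℝ :=
  Real.sqrt (∑ i ∈ S, (v i) ^ 2)

/-- ℓ∞ norm of the subvector indexed by `S` (0 if `S` is empty). -/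
noncomputable def linfS {k : ℕ} (S : Finset (Fin k)) (v : Fin k → ℝ) : ℝ := ⨆ i ∈ S, |v i|

lemma l2_eq_norm {k : ℕ} (v : Fin k → ℝ) : l2 v = ‖(WithLp.equiv 2 (Fin k → ℝ)).symm v‖ := by
  rw [EuclideanSpace.norm_eq]; simp [l2, Real.norm_eq_abs, sq_abs]

lemma l2_nonneg {k : ℕ} (v : Fin k → ℝ) : 0 ≤ l2 v := Real.sqrt_nonneg _

lemma l2_sub_le {k : ℕ} (a b : Fin k → ℝ) : l2 (a - b) ≤ l2 a + l2 b := by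
  have h : (WithLp.equiv 2 (Fin k → ℝ)).symm (a - b)
      = (WithLp.equiv 2 (Fin k → ℝ)).symm a - (WithLp.equiv 2 (Fin k → ℝ)).symm b := rfl
  rw [l2_eq_norm, l2_eq_norm, l2_eq_norm, h]
  exact norm_sub_le _ _

lemma abs_dot_le {k : ℕ} (a b : Fin k → ℝ) : |∑ i, a i * b i| ≤ l2 a * l2 b := by
  have := abs_real_inner_le_norm ((WithLp.equiv 2 (Fin k → ℝ)).symm a)
    ((WithLp.equiv 2 (Fin k → ℝ)).symm b)
  rw [l2_eq_norm, l2_eq_norm]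
  simpa [PiLp.inner_apply, RCLike.inner_apply, mul_comm] using this


/-- Bregman distance and residual bounds for the lasso-type problem. -/
theorem stmt8 {m n l : ℕ} (Φ : Matrix (Fin m) (Fin n) ℝ) (Ψ : Matrix (Fin n) (Fin l) ℝ)
    (xs : Fin n → ℝ)
    (y : Fin l → ℝ)
    (hy : ∀ i, (Ψ.transpose.mulVec xs i ≠ 0 → y i = Real.sign (Ψ.transpose.mulVec xs i))
      ∧ |y i| ≤ 1)
    (β : Fin m → ℝ) (hβ : Ψ.mulVec y = Φ.transpose.mulVec β) :
    ∀ δ lam : ℝ, 0 < δ → 0 < lam → ∀ b : Fin m → ℝ, l2 (Φ.mulVec xs - b) ≤ δ →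
      ∀ x : Fin n → ℝ,
        (∀ z, (l2 (Φ.mulVec x - b)) ^ 2 + lam * l1 (Ψ.transpose.mulVec x)
          ≤ (l2 (Φ.mulVec z - b)) ^ 2 + lam * l1 (Ψ.transpose.mulVec z)) →
        (l1 (Ψ.transpose.mulVec x) - l1 (Ψ.transpose.mulVec xs)
            - ∑ j, Ψ.mulVec y j * (x j - xs j) ≤ (δ + lam * l2 β / 2) ^ 2 / lam)
          ∧ l2 (Φ.mulVec x - b) ≤ δ + lam * l2 β := by
  intro δ lam hδ hlam b hb x hmin
  set u := Ψ.transpose.mulVec x with hu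
  set us := Ψ.transpose.mulVec xs with hus
  set r := Φ.mulVec x - b with hr
  set rs := Φ.mulVec xs - b with hrs
  set R := l2 r with hR
  set ρ := l2 rs with hρ
  set B := l2 β with hB
  have hR0 : 0 ≤ R := l2_nonneg _
  have hρ0 : 0 ≤ ρ := l2_nonneg _
  have hB0 : 0 ≤ B := l2_nonneg _
  -- Step A : ∑ i, y i * us i = l1 us
  have hA : ∑ i, y i * us i = l1 us := by
    unfold l1
    refine Finset.sum_congr rfl fun i _ => ?_
    by_cases h : us i = 0
    · simp [h]
    · rw [(hy i).1 h]
      rcases lt_trichotomy (us i) 0 with hlt | heq | hgt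
      · rw [Real.sign_of_neg hlt, abs_of_neg hlt]; ring
      · exact absurd heq h
      · rw [Real.sign_of_pos hgt, abs_of_pos hgt]; ring
  -- Step B : ∑ i, y i * u i ≤ l1 u
  have hBnd : ∑ i, y i * u i ≤ l1 u := by
    unfold l1
    refine Finset.sum_le_sum fun i _ => ?_
    calc y i * u i ≤ |y i * u i| := le_abs_self _
      _ = |y i| * |u i| := abs_mul _ _
      _ ≤ 1 * |u i| := mul_le_mul_of_nonneg_right (hy i).2 (abs_nonneg _)
      _ = |u i| := one_mul _
  -- the pairing term
  have hdot : ∀ v : Fin n → ℝ, ∑ j, Ψ.mulVec y j * v j = y ⬝ᵥ Ψ.transpose.mulVec v := by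
    intro v
    have : Ψ.mulVec y ⬝ᵥ v = y ⬝ᵥ Ψ.transpose.mulVec v := by
      rw [dotProduct_comm, dotProduct_mulVec, mulVec_transpose, dotProduct_comm]
    simpa [dotProduct] using this
  have hdotβ : ∀ v : Fin n → ℝ, ∑ j, Ψ.mulVec y j * v j = β ⬝ᵥ Φ.mulVec v := by
    intro v
    have : Ψ.mulVec y ⬝ᵥ v = β ⬝ᵥ Φ.mulVec v := by
      rw [hβ, dotProduct_comm, dotProduct_mulVec, vecMul_transpose, dotProduct_comm]
    simpa [dotProduct] using this
  set P := ∑ j, Ψ.mulVec y j * (x j - xs j) with hP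
  have e : P = (∑ j, Ψ.mulVec y j * x j) - ∑ j, Ψ.mulVec y j * xs j := by
    rw [hP]; simp [mul_sub, Finset.sum_sub_distrib]
  have h1 : P = (∑ i, y i * u i) - l1 us := by
    rw [e, hdot x, hdot xs, ← hA]
    simp [dotProduct]
    rfl
  have h2 : P = β ⬝ᵥ (r - rs) := by
    have hrr : r - rs = Φ.mulVec x - Φ.mulVec xs := by rw [hr, hrs]; abel
    rw [e, hdotβ x, hdotβ xs, hrr, dotProduct_sub]
  have hPlb : -(B * (R + ρ)) ≤ P := by
    have h3 : |β ⬝ᵥ (r - rs)| ≤ B * l2 (r - rs) := by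
      simpa [dotProduct] using abs_dot_le β (r - rs)
    have h4 : l2 (r - rs) ≤ R + ρ := l2_sub_le r rs
    have h5 : |P| ≤ B * (R + ρ) := by
      rw [h2]
      calc |β ⬝ᵥ (r - rs)| ≤ B * l2 (r - rs) := h3
        _ ≤ B * (R + ρ) := by
            exact mul_le_mul_of_nonneg_left h4 hB0
    linarith [neg_abs_le P]
  have hmin' : R ^ 2 + lam * l1 u ≤ ρ ^ 2 + lam * l1 us := hmin xs
  have hD0 : 0 ≤ l1 u - l1 us - P := by
    have := hBnd; linarith [h1]
  have hmain : R ^ 2 + lam * (l1 u - l1 us - P) ≤ ρ ^ 2 + lam * (B * (R + ρ)) := by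
    linarith [hmin', mul_le_mul_of_nonneg_left hPlb hlam.le]
  constructor
  · rw [le_div_iff₀ hlam]
    linarith [hmain, sq_nonneg (R - lam * B / 2), mul_self_le_mul_self hρ0 hb,
      mul_le_mul_of_nonneg_left hb (mul_nonneg hlam.le hB0),
      mul_le_mul_of_nonneg_left hD0 hlam.le]
  · nlinarith [hmain, mul_le_mul_of_nonneg_left hD0 hlam.le,
      mul_nonneg hlam.le hB0, hb, hρ0, hR0, hδ]
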